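/- For every μ ≥ 2 and every integer s ≥ 3μ² − μ, there exists a μ-way latin trade of volume s. -/

import Mathlib

/-- A partial latin rectangle on an `r × n` array with natural-number symbols:
each symbol occurs at most once in each row and in each column. -/
def IsPartialLatinRect {r n : ℕ} (f : Fin r → Fin n → Option ℕ) : Prop :=
  (∀ i j₁ j₂ s, f i j₁ = some s → f i j₂ = some s → j₁ = j₂) ∧
  (∀ i₁ i₂ j s, f i₁ j = some s → f i₂ j = some s → i₁ = i₂)

/-- A μ-way latin trade: μ partial latin rectangles with the same filled cells,
pairwise distinct entries in each filled cell, and common row symbol sets and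
column symbol sets. -/
def IsMuWayLatinTrade {μ r n : ℕ} (T : Fin μ → Fin r → Fin n → Option ℕ) : Prop :=
  (∀ m, IsPartialLatinRect (T m)) ∧
  (∀ m m' i j, (T m i j).isSome → (T m' i j).isSome) ∧
  (∀ m m' i j, m ≠ m' → (T m i j).isSome → T m i j ≠ T m' i j) ∧
  (∀ m m' i, {s | ∃ j, T m i j = some s} = {s | ∃ j, T m' i j = some s}) ∧
  (∀ m m' j, {s | ∃ i, T m i j = some s} = {s | ∃ i, T m' i j = some s})

/-- The set `R i` of symbols appearing in row `i` (common to all μ rectangles). -/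
def rowSet {μ r n : ℕ} (T : Fin μ → Fin r → Fin n → Option ℕ) (i : Fin r) : Set ℕ :=
  {s | ∃ m j, T m i j = some s}

/-- The set `C j` of symbols appearing in column `j` (common to all μ rectangles). -/
def colSet {μ r n : ℕ} (T : Fin μ → Fin r → Fin n → Option ℕ) (j : Fin n) : Set ℕ :=
  {s | ∃ m i, T m i j = some s}

/-- The volume of a trade: the number of filled cells. -/
def tradeVolume {μ r n : ℕ} (T : Fin μ → Fin r → Fin n → Option ℕ) : ℕ :=
  (Finset.univ.filter fun p : Fin r × Fin n => ∃ m, (T m p.1 p.2).isSome).card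


open Finset

/-- linearize `x % n` when `x < 4*n`. -/
lemma modc {x n : ℕ} (hn : 0 < n) (h : x < 4*n) :
    (x < n ∧ x % n = x) ∨ (n ≤ x ∧ x < 2*n ∧ x % n = x - n) ∨
    (2*n ≤ x ∧ x < 3*n ∧ x % n = x - 2*n) ∨ (3*n ≤ x ∧ x < 4*n ∧ x % n = x - 3*n) := by
  rcases Nat.lt_or_ge x n with h1 | h1
  · exact Or.inl ⟨h1, Nat.mod_eq_of_lt h1⟩
  rcases Nat.lt_or_ge x (2*n) with h2 | h2
  · refine Or.inr (Or.inl ⟨h1, h2, ?_⟩)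
    rw [Nat.mod_eq_sub_mod h1, Nat.mod_eq_of_lt (by omega)]
  rcases Nat.lt_or_ge x (3*n) with h3 | h3
  · refine Or.inr (Or.inr (Or.inl ⟨h2, h3, ?_⟩))
    rw [Nat.mod_eq_sub_mod h1, Nat.mod_eq_sub_mod (by omega), Nat.mod_eq_of_lt (by omega)]
    omega
  · refine Or.inr (Or.inr (Or.inr ⟨h3, h, ?_⟩))
    rw [Nat.mod_eq_sub_mod h1, Nat.mod_eq_sub_mod (by omega), Nat.mod_eq_sub_mod (by omega),
      Nat.mod_eq_of_lt (by omega)]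
    omega

lemma add_right_cancel_mod {n c a b : ℕ} (ha : a < n) (hb : b < n)
    (h : (a + c) % n = (b + c) % n) : a = b := by
  have h2 : a ≡ b [MOD n] := Nat.ModEq.add_right_cancel rfl h
  rwa [Nat.ModEq, Nat.mod_eq_of_lt ha, Nat.mod_eq_of_lt hb] at h2

lemma add_left_cancel_mod {n c a b : ℕ} (ha : a < n) (hb : b < n)
    (h : (c + a) % n = (c + b) % n) : a = b := by
  rw [Nat.add_comm c a, Nat.add_comm c b] at h
  exact add_right_cancel_mod ha hb h

/-- characterize the value set of a partial row as a given finset, via cardinality. -/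
lemma oimg_eq {N : ℕ} (f : Fin N → Option ℕ) (S : Finset ℕ)
    (h1 : ∀ j s, f j = some s → s ∈ S)
    (h2 : ∀ j₁ j₂ s, f j₁ = some s → f j₂ = some s → j₁ = j₂)
    (h3 : S.card ≤ (Finset.univ.filter fun j => (f j).isSome).card) :
    {s | ∃ j, f j = some s} = ↑S := by
  classical
  set F := Finset.univ.filter fun j => (f j).isSome with hF
  set I := F.image fun j => (f j).getD 0 with hI
  have hmem : ∀ s : ℕ, s ∈ I ↔ ∃ j, f j = some s := by
    intro s
    simp only [hI, hF, Finset.mem_image, Finset.mem_filter, Finset.mem_univ, true_and]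
    constructor
    · rintro ⟨j, hj, hjs⟩
      obtain ⟨v, hv⟩ := Option.isSome_iff_exists.mp hj
      refine ⟨j, ?_⟩
      rw [hv] at hjs ⊢
      simp at hjs; rw [hjs]
    · rintro ⟨j, hj⟩
      exact ⟨j, by simp [hj]⟩
  have hIS : I ⊆ S := by
    intro s hs
    obtain ⟨j, hj⟩ := (hmem s).mp hs
    exact h1 j s hj
  have hinj : Set.InjOn (fun j => (f j).getD 0) ↑F := by
    intro a ha b hb hab
    simp only [hF, Finset.coe_filter, Set.mem_setOf_eq] at ha hb
    obtain ⟨va, hva⟩ := Option.isSome_iff_exists.mp ha.2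
    obtain ⟨vb, hvb⟩ := Option.isSome_iff_exists.mp hb.2
    simp only [hva, hvb, Option.getD_some] at hab
    subst hab
    exact h2 a b va hva hvb
  have hcard : I.card = F.card := Finset.card_image_of_injOn hinj
  have : I = S := Finset.eq_of_subset_of_card_le hIS (by omega)
  ext s
  rw [Set.mem_setOf_eq, ← hmem s, this]
  simp

section Rect
variable (μ r n : ℕ)

def rectT : Fin μ → Fin r → Fin n → Option ℕ :=
  fun m i j => some ((j.1 + (i.1 + m.1) % r) % n)

variable {μ r n}

lemma rect_trade (hμ : 0 < μ) (hr : μ ≤ r) (hn : r ≤ n) :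
    IsMuWayLatinTrade (rectT μ r n) := by
  have hn0 : 0 < n := by omega
  have hr0 : 0 < r := by omega
  refine ⟨?_, ?_, ?_, ?_, ?_⟩
  · -- latin
    intro m
    constructor
    · intro i j₁ j₂ s hs1 hs2
      simp only [rectT, Option.some.injEq] at hs1 hs2
      exact Fin.ext (add_right_cancel_mod j₁.2 j₂.2 (hs1.trans hs2.symm))
    · intro i₁ i₂ j s hs1 hs2
      simp only [rectT, Option.some.injEq] at hs1 hs2
      have h := add_left_cancel_mod (n := n) (Nat.lt_of_lt_of_le (Nat.mod_lt _ hr0) hn)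
        (Nat.lt_of_lt_of_le (Nat.mod_lt _ hr0) hn) (hs1.trans hs2.symm)
      have h2 := add_right_cancel_mod (n := r) i₁.2 i₂.2 h
      exact Fin.ext h2
  · intro m m' i j
    simp [rectT]
  · intro m m' i j hmm _
    simp only [rectT, ne_eq, Option.some.injEq]
    intro h
    have h1 := add_left_cancel_mod (n := n) (Nat.lt_of_lt_of_le (Nat.mod_lt _ hr0) hn)
      (Nat.lt_of_lt_of_le (Nat.mod_lt _ hr0) hn) h
    have h2 := add_left_cancel_mod (n := r) (Nat.lt_of_lt_of_le m.2 hr)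
      (Nat.lt_of_lt_of_le m'.2 hr) h1
    exact hmm (Fin.ext h2)
  · -- row sets
    intro m m' i
    have key : ∀ mm : Fin μ, {s | ∃ j, rectT μ r n mm i j = some s} = ↑(Finset.range n) := by
      intro mm
      apply oimg_eq
      · intro j s hs
        simp only [rectT, Option.some.injEq] at hs
        simp [← hs, Nat.mod_lt _ hn0]
      · intro j₁ j₂ s hs1 hs2
        simp only [rectT, Option.some.injEq] at hs1 hs2
        exact Fin.ext (add_right_cancel_mod j₁.2 j₂.2 (hs1.trans hs2.symm))
      · have : (Finset.univ.filter fun j : Fin n => (rectT μ r n mm i j).isSome) = Finset.univ := by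
          apply Finset.filter_true_of_mem; intro j _; simp [rectT]
        rw [this]; simp
    rw [key m, key m']
  · -- col sets
    intro m m' j
    have key : ∀ mm : Fin μ, {s | ∃ i, rectT μ r n mm i j = some s} =
        ↑((Finset.range r).image fun v => (j.1 + v) % n) := by
      intro mm
      apply oimg_eq
      · intro i s hs
        simp only [rectT, Option.some.injEq] at hs
        exact Finset.mem_image.mpr ⟨(i.1 + mm.1) % r, Finset.mem_range.mpr (Nat.mod_lt _ hr0), hs⟩
      · intro i₁ i₂ s hs1 hs2
        simp only [rectT, Option.some.injEq] at hs1 hs2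
        have h := add_left_cancel_mod (n := n) (Nat.lt_of_lt_of_le (Nat.mod_lt _ hr0) hn)
          (Nat.lt_of_lt_of_le (Nat.mod_lt _ hr0) hn) (hs1.trans hs2.symm)
        exact Fin.ext (add_right_cancel_mod (n := r) i₁.2 i₂.2 h)
      · have h4 : (Finset.univ.filter fun i : Fin r => (rectT μ r n mm i j).isSome) = Finset.univ := by
          apply Finset.filter_true_of_mem; intro i _; simp [rectT]
        rw [h4, Finset.card_univ, Fintype.card_fin]
        exact le_trans Finset.card_image_le (by rw [Finset.card_range])
    rw [key m, key m']

lemma rect_volume (hμ : 0 < μ) : tradeVolume (rectT μ r n) = r * n := by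
  unfold tradeVolume
  have : (Finset.univ.filter fun p : Fin r × Fin n => ∃ m, (rectT μ r n m p.1 p.2).isSome) =
      Finset.univ := by
    apply Finset.filter_true_of_mem
    intro p _
    exact ⟨⟨0, hμ⟩, by simp [rectT]⟩
  rw [this, Finset.card_univ]
  simp

end Rect

section Dsum
variable {μ r1 c1 r2 c2 : ℕ}

def dsum (T1 : Fin μ → Fin r1 → Fin c1 → Option ℕ) (T2 : Fin μ → Fin r2 → Fin c2 → Option ℕ) :
    Fin μ → Fin (r1 + r2) → Fin (c1 + c2) → Option ℕ :=
  fun m i j =>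
    if h : i.1 < r1 then
      if h' : j.1 < c1 then T1 m ⟨i.1, h⟩ ⟨j.1, h'⟩ else none
    else
      if h' : c1 ≤ j.1 then
        T2 m ⟨i.1 - r1, by have := i.2; omega⟩ ⟨j.1 - c1, by have := j.2; omega⟩
      else none

variable {T1 : Fin μ → Fin r1 → Fin c1 → Option ℕ} {T2 : Fin μ → Fin r2 → Fin c2 → Option ℕ}

lemma dsum_rowset1 (m : Fin μ) (i : Fin (r1 + r2)) (h : i.1 < r1) :
    {s | ∃ j, dsum T1 T2 m i j = some s} = {s | ∃ j1, T1 m ⟨i.1, h⟩ j1 = some s} := by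
  ext s
  simp only [Set.mem_setOf_eq]
  constructor
  · rintro ⟨j, hj⟩
    unfold dsum at hj
    rw [dif_pos h] at hj
    by_cases h' : j.1 < c1
    · rw [dif_pos h'] at hj; exact ⟨⟨j.1, h'⟩, hj⟩
    · rw [dif_neg h'] at hj; exact absurd hj (by simp)
  · rintro ⟨j1, hj⟩
    refine ⟨⟨j1.1, by omega⟩, ?_⟩
    unfold dsum
    rw [dif_pos h, dif_pos j1.2]
    convert hj
  
lemma dsum_rowset2 (m : Fin μ) (i : Fin (r1 + r2)) (h : ¬ i.1 < r1) :
    {s | ∃ j, dsum T1 T2 m i j = some s} =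
      {s | ∃ j2, T2 m ⟨i.1 - r1, by have := i.2; omega⟩ j2 = some s} := by
  ext s
  simp only [Set.mem_setOf_eq]
  constructor
  · rintro ⟨j, hj⟩
    unfold dsum at hj
    rw [dif_neg h] at hj
    by_cases h' : c1 ≤ j.1
    · rw [dif_pos h'] at hj; exact ⟨⟨j.1 - c1, by have := j.2; omega⟩, hj⟩
    · rw [dif_neg h'] at hj; exact absurd hj (by simp)
  · rintro ⟨j2, hj⟩
    refine ⟨⟨c1 + j2.1, by have := j2.2; omega⟩, ?_⟩
    unfold dsum
    rw [dif_neg h, dif_pos (by simp)]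
    convert hj using 2
    exact Fin.ext (by simp)

lemma dsum_colset1 (m : Fin μ) (j : Fin (c1 + c2)) (h : j.1 < c1) :
    {s | ∃ i, dsum T1 T2 m i j = some s} = {s | ∃ i1, T1 m i1 ⟨j.1, h⟩ = some s} := by
  ext s
  simp only [Set.mem_setOf_eq]
  constructor
  · rintro ⟨i, hi⟩
    unfold dsum at hi
    by_cases h' : i.1 < r1
    · rw [dif_pos h', dif_pos h] at hi; exact ⟨⟨i.1, h'⟩, hi⟩
    · rw [dif_neg h', dif_neg (by omega)] at hi; exact absurd hi (by simp)
  · rintro ⟨i1, hi⟩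
    refine ⟨⟨i1.1, by omega⟩, ?_⟩
    unfold dsum
    rw [dif_pos i1.2, dif_pos h]
    convert hi

lemma dsum_colset2 (m : Fin μ) (j : Fin (c1 + c2)) (h : ¬ j.1 < c1) :
    {s | ∃ i, dsum T1 T2 m i j = some s} =
      {s | ∃ i2, T2 m i2 ⟨j.1 - c1, by have := j.2; omega⟩ = some s} := by
  ext s
  simp only [Set.mem_setOf_eq]
  constructor
  · rintro ⟨i, hi⟩
    unfold dsum at hi
    by_cases h' : i.1 < r1
    · rw [dif_pos h', dif_neg h] at hi; exact absurd hi (by simp)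
    · rw [dif_neg h', dif_pos (by omega)] at hi; exact ⟨⟨i.1 - r1, by have := i.2; omega⟩, hi⟩
  · rintro ⟨i2, hi⟩
    refine ⟨⟨r1 + i2.1, by have := i2.2; omega⟩, ?_⟩
    unfold dsum
    rw [dif_neg (by omega : ¬ (r1 + i2.1 < r1)), dif_pos (by omega : c1 ≤ j.1)]
    convert hi using 2
    exact Fin.ext (by simp)

lemma dsum_trade (h1 : IsMuWayLatinTrade T1) (h2 : IsMuWayLatinTrade T2) :
    IsMuWayLatinTrade (dsum T1 T2) := by
  obtain ⟨h1l, h1c, h1d, h1r, h1co⟩ := h1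
  obtain ⟨h2l, h2c, h2d, h2r, h2co⟩ := h2
  refine ⟨?_, ?_, ?_, ?_, ?_⟩
  · intro m
    constructor
    · intro i j₁ j₂ s hs1 hs2
      unfold dsum at hs1 hs2
      by_cases h : i.1 < r1
      · rw [dif_pos h] at hs1 hs2
        by_cases hj1 : j₁.1 < c1
        · rw [dif_pos hj1] at hs1
          by_cases hj2 : j₂.1 < c1
          · rw [dif_pos hj2] at hs2
            have := (h1l m).1 _ _ _ _ hs1 hs2
            simp only [Fin.mk.injEq] at this
            exact Fin.ext this
          · rw [dif_neg hj2] at hs2; exact absurd hs2 (by simp)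
        · rw [dif_neg hj1] at hs1; exact absurd hs1 (by simp)
      · rw [dif_neg h] at hs1 hs2
        by_cases hj1 : c1 ≤ j₁.1
        · rw [dif_pos hj1] at hs1
          by_cases hj2 : c1 ≤ j₂.1
          · rw [dif_pos hj2] at hs2
            have := (h2l m).1 _ _ _ _ hs1 hs2
            simp only [Fin.mk.injEq] at this
            exact Fin.ext (by omega)
          · rw [dif_neg hj2] at hs2; exact absurd hs2 (by simp)
        · rw [dif_neg hj1] at hs1; exact absurd hs1 (by simp)
    · intro i₁ i₂ j s hs1 hs2
      unfold dsum at hs1 hs2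
      by_cases h : j.1 < c1
      · by_cases hi1 : i₁.1 < r1
        · rw [dif_pos hi1, dif_pos h] at hs1
          by_cases hi2 : i₂.1 < r1
          · rw [dif_pos hi2, dif_pos h] at hs2
            have := (h1l m).2 _ _ _ _ hs1 hs2
            simp only [Fin.mk.injEq] at this
            exact Fin.ext this
          · rw [dif_neg hi2, dif_neg (by omega)] at hs2; exact absurd hs2 (by simp)
        · rw [dif_neg hi1, dif_neg (by omega)] at hs1; exact absurd hs1 (by simp)
      · by_cases hi1 : i₁.1 < r1
        · rw [dif_pos hi1, dif_neg h] at hs1; exact absurd hs1 (by simp)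
        · rw [dif_neg hi1, dif_pos (by omega)] at hs1
          by_cases hi2 : i₂.1 < r1
          · rw [dif_pos hi2, dif_neg h] at hs2; exact absurd hs2 (by simp)
          · rw [dif_neg hi2, dif_pos (by omega)] at hs2
            have := (h2l m).2 _ _ _ _ hs1 hs2
            simp only [Fin.mk.injEq] at this
            exact Fin.ext (by omega)
  · intro m m' i j
    unfold dsum
    by_cases h : i.1 < r1
    · rw [dif_pos h, dif_pos h]
      by_cases h' : j.1 < c1
      · rw [dif_pos h', dif_pos h']; exact h1c m m' _ _
      · rw [dif_neg h', dif_neg h']; exact id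
    · rw [dif_neg h, dif_neg h]
      by_cases h' : c1 ≤ j.1
      · rw [dif_pos h', dif_pos h']; exact h2c m m' _ _
      · rw [dif_neg h', dif_neg h']; exact id
  · intro m m' i j hmm hsome
    unfold dsum at hsome ⊢
    by_cases h : i.1 < r1
    · simp only [dif_pos h] at hsome ⊢
      by_cases h' : j.1 < c1
      · simp only [dif_pos h'] at hsome ⊢; exact h1d m m' _ _ hmm hsome
      · simp only [dif_neg h'] at hsome; exact absurd hsome (by simp)
    · simp only [dif_neg h] at hsome ⊢
      by_cases h' : c1 ≤ j.1
      · simp only [dif_pos h'] at hsome ⊢; exact h2d m m' _ _ hmm hsome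
      · simp only [dif_neg h'] at hsome; exact absurd hsome (by simp)
  · intro m m' i
    by_cases h : i.1 < r1
    · rw [dsum_rowset1 m i h, dsum_rowset1 m' i h]; exact h1r m m' _
    · rw [dsum_rowset2 m i h, dsum_rowset2 m' i h]; exact h2r m m' _
  · intro m m' j
    by_cases h : j.1 < c1
    · rw [dsum_colset1 m j h, dsum_colset1 m' j h]; exact h1co m m' _
    · rw [dsum_colset2 m j h, dsum_colset2 m' j h]; exact h2co m m' _

lemma dsum_volume : tradeVolume (dsum T1 T2) = tradeVolume T1 + tradeVolume T2 := by
  classical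
  unfold tradeVolume
  set e1 : Fin r1 × Fin c1 → Fin (r1 + r2) × Fin (c1 + c2) :=
    fun p => (⟨p.1.1, by have := p.1.2; omega⟩, ⟨p.2.1, by have := p.2.2; omega⟩) with he1
  set e2 : Fin r2 × Fin c2 → Fin (r1 + r2) × Fin (c1 + c2) :=
    fun p => (⟨r1 + p.1.1, by have := p.1.2; omega⟩, ⟨c1 + p.2.1, by have := p.2.2; omega⟩) with he2
  have key : (Finset.univ.filter fun p : Fin (r1+r2) × Fin (c1+c2) =>
      ∃ m, (dsum T1 T2 m p.1 p.2).isSome) =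
      ((Finset.univ.filter fun p : Fin r1 × Fin c1 => ∃ m, (T1 m p.1 p.2).isSome).image e1) ∪
      ((Finset.univ.filter fun p : Fin r2 × Fin c2 => ∃ m, (T2 m p.1 p.2).isSome).image e2) := by
    ext p
    simp only [Finset.mem_union, Finset.mem_image, Finset.mem_filter, Finset.mem_univ, true_and]
    constructor
    · rintro ⟨m, hm⟩
      unfold dsum at hm
      by_cases h : p.1.1 < r1
      · rw [dif_pos h] at hm
        by_cases h' : p.2.1 < c1
        · rw [dif_pos h'] at hm
          exact Or.inl ⟨(⟨p.1.1, h⟩, ⟨p.2.1, h'⟩), ⟨m, hm⟩, by simp [he1]⟩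
        · rw [dif_neg h'] at hm; exact absurd hm (by simp)
      · rw [dif_neg h] at hm
        by_cases h' : c1 ≤ p.2.1
        · rw [dif_pos h'] at hm
          refine Or.inr ⟨(⟨p.1.1 - r1, by have := p.1.2; omega⟩,
            ⟨p.2.1 - c1, by have := p.2.2; omega⟩), ⟨m, hm⟩, ?_⟩
          simp only [he2, Prod.ext_iff]
          constructor <;> (apply Fin.ext; simp; omega)
        · rw [dif_neg h'] at hm; exact absurd hm (by simp)
    · rintro (⟨q, ⟨m, hm⟩, hq⟩ | ⟨q, ⟨m, hm⟩, hq⟩)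
      · refine ⟨m, ?_⟩
        subst hq
        unfold dsum
        rw [dif_pos q.1.2, dif_pos q.2.2]
        exact hm
      · refine ⟨m, ?_⟩
        subst hq
        unfold dsum
        rw [dif_neg (by simp [he2]), dif_pos (by simp [he2])]
        simpa [he2] using hm
  rw [key, Finset.card_union_of_disjoint, Finset.card_image_of_injective,
    Finset.card_image_of_injective]
  · intro a b hab
    simp only [he2, Prod.ext_iff, Fin.ext_iff] at hab
    exact Prod.ext (Fin.ext (by omega)) (Fin.ext (by omega))
  · intro a b hab
    simp only [he1, Prod.ext_iff, Fin.ext_iff] at hab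
    exact Prod.ext (Fin.ext (by omega)) (Fin.ext (by omega))
  · rw [Finset.disjoint_left]
    rintro p hp hp2
    simp only [Finset.mem_image] at hp hp2
    obtain ⟨a, _, ha⟩ := hp
    obtain ⟨b, _, hb⟩ := hp2
    rw [← hb] at ha
    simp only [he1, he2, Prod.ext_iff, Fin.ext_iff] at ha
    have := a.1.2
    omega

end Dsum

section Special
variable {μ : ℕ}

def sTf (μ m r j : ℕ) : Option ℕ :=
  if 1 ≤ j ∧ j ≤ μ then
    if r = j then none
    else if (r + μ - j) % (μ + 1) = m then some (j % μ)
    else some (μ - 1 + ((r + μ - j) % (μ + 1) + μ - m) % μ)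
  else
    if r = (m + (if j = 0 then μ - 1 else j - μ)) % μ + 1 then
      some (μ - 1 + (if j = 0 then μ - 1 else j - μ))
    else
      some ((3*μ + r - (if j = 0 then μ - 1 else j - μ) - m -
        (if (m + (if j = 0 then μ - 1 else j - μ)) % μ + 1 < r then 1 else 0)) % μ)

def specialT (μ : ℕ) : Fin μ → Fin (μ+1) → Fin (2*μ-1) → Option ℕ :=
  fun m r j => sTf μ m.1 r.1 j.1

lemma ssome {m r j : ℕ} (hμ : 2 ≤ μ) :
    (sTf μ m r j).isSome ↔ ¬(1 ≤ j ∧ j ≤ μ ∧ r = j) := by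
  unfold sTf
  split_ifs with h1 h2 h3 <;> simp_all <;> omega

lemma sval {m r j v : ℕ} (hμ : 2 ≤ μ) (hm : m < μ) (hr : r ≤ μ) (hj : j < 2*μ-1)
    (hv : sTf μ m r j = some v) :
    (∃ u, 1 ≤ j ∧ j ≤ μ ∧ r ≠ j ∧ u < μ ∧ (u = r + μ - j ∨ u + (μ+1) = r + μ - j) ∧
      ((u = m ∧ ((j < μ ∧ v = j) ∨ (j = μ ∧ v = 0))) ∨
       (u ≠ m ∧ μ ≤ v ∧ v ≤ 2*μ-2 ∧ (v + m + 1 = 2*μ + u ∨ v + m + 1 = μ + u)))) ∨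
    (∃ k K, ¬(1 ≤ j ∧ j ≤ μ) ∧ 1 ≤ k ∧ k ≤ μ-1 ∧ ((j = 0 ∧ k = μ-1) ∨ (μ+1 ≤ j ∧ k + μ = j)) ∧
      K < μ ∧ (K = m + k ∨ K + μ = m + k) ∧
      ((r = K + 1 ∧ v = μ - 1 + k) ∨
       (r ≠ K + 1 ∧ v < μ ∧
         ((K + 1 < r ∧ (v + k + m + 1 + μ = 3*μ + r ∨ v + k + m + 1 + 2*μ = 3*μ + r ∨
             v + k + m + 1 + 3*μ = 3*μ + r)) ∨
          (r < K + 1 ∧ (v + k + m + μ = 3*μ + r ∨ v + k + m + 2*μ = 3*μ + r ∨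
             v + k + m + 3*μ = 3*μ + r)))))) := by
  unfold sTf at hv
  by_cases hsm : 1 ≤ j ∧ j ≤ μ
  · rw [if_pos hsm] at hv
    by_cases hrj : r = j
    · rw [if_pos hrj] at hv; exact absurd hv (by simp)
    rw [if_neg hrj] at hv
    set u := (r + μ - j) % (μ+1) with hu
    have hchar := modc (n := μ+1) (by omega) (x := r + μ - j) (by omega)
    rw [← hu] at hchar
    have hune : u < μ := by omega
    refine Or.inl ⟨u, hsm.1, hsm.2, hrj, hune, by omega, ?_⟩
    by_cases hum : u = m
    · rw [if_pos hum] at hv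
      simp only [Option.some.injEq] at hv
      refine Or.inl ⟨hum, ?_⟩
      have h2 := modc (n := μ) (by omega) (x := j) (by omega)
      omega
    · rw [if_neg hum] at hv
      simp only [Option.some.injEq] at hv
      refine Or.inr ⟨hum, ?_⟩
      have h2 := modc (n := μ) (by omega) (x := u + μ - m) (by omega)
      omega
  · rw [if_neg hsm] at hv
    set k := (if j = 0 then μ - 1 else j - μ) with hk
    set K := (m + k) % μ with hK
    have hkfacts : 1 ≤ k ∧ k ≤ μ-1 ∧ ((j = 0 ∧ k = μ-1) ∨ (μ+1 ≤ j ∧ k + μ = j)) := by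
      by_cases hj0 : j = 0
      · rw [hk, if_pos hj0]; exact ⟨by omega, by omega, Or.inl ⟨hj0, rfl⟩⟩
      · rw [hk, if_neg hj0]
        have : μ+1 ≤ j := by omega
        exact ⟨by omega, by omega, Or.inr ⟨this, by omega⟩⟩
    have hKchar := modc (n := μ) (by omega) (x := m + k) (by omega)
    rw [← hK] at hKchar
    have hKfacts : K < μ ∧ (K = m + k ∨ K + μ = m + k) := by omega
    by_cases hrk : r = K + 1
    · rw [if_pos hrk] at hv
      simp only [Option.some.injEq] at hv
      exact Or.inr ⟨k, K, hsm, hkfacts.1, hkfacts.2.1, hkfacts.2.2, hKfacts.1, hKfacts.2,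
        Or.inl ⟨hrk, hv.symm⟩⟩
    · rw [if_neg hrk] at hv
      refine Or.inr ⟨k, K, hsm, hkfacts.1, hkfacts.2.1, hkfacts.2.2, hKfacts.1, hKfacts.2,
        Or.inr ⟨hrk, ?_⟩⟩
      by_cases hind : K + 1 < r
      · rw [if_pos hind] at hv
        simp only [Option.some.injEq] at hv
        have h2 := modc (n := μ) (by omega) (x := 3*μ + r - k - m - 1) (by omega)
        omega
      · rw [if_neg hind] at hv
        simp only [Option.some.injEq] at hv
        have h2 := modc (n := μ) (by omega) (x := 3*μ + r - k - m - 0) (by omega)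
        omega

end Special

section Special2
variable {μ : ℕ}

lemma special_latin_row (hμ : 2 ≤ μ) (m : Fin μ) (r : Fin (μ+1)) (j₁ j₂ : Fin (2*μ-1)) (s : ℕ)
    (h1 : specialT μ m r j₁ = some s) (h2 : specialT μ m r j₂ = some s) : j₁ = j₂ := by
  have hr : r.1 ≤ μ := by omega
  have A := sval hμ m.2 hr j₁.2 h1
  have B := sval hμ m.2 hr j₂.2 h2
  apply Fin.ext
  rcases A with ⟨u1, hA⟩ | ⟨k1, K1, hA⟩ <;> rcases B with ⟨u2, hB⟩ | ⟨k2, K2, hB⟩ <;> omega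

lemma special_latin_col (hμ : 2 ≤ μ) (m : Fin μ) (r₁ r₂ : Fin (μ+1)) (j : Fin (2*μ-1)) (s : ℕ)
    (h1 : specialT μ m r₁ j = some s) (h2 : specialT μ m r₂ j = some s) : r₁ = r₂ := by
  have A := sval hμ m.2 (by omega : r₁.1 ≤ μ) j.2 h1
  have B := sval hμ m.2 (by omega : r₂.1 ≤ μ) j.2 h2
  apply Fin.ext
  rcases A with ⟨u1, hA⟩ | ⟨k1, K1, hA⟩ <;> rcases B with ⟨u2, hB⟩ | ⟨k2, K2, hB⟩ <;> omega

lemma special_distinct (hμ : 2 ≤ μ) (m m' : Fin μ) (r : Fin (μ+1)) (j : Fin (2*μ-1))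
    (hmm : m ≠ m') (hs : (specialT μ m r j).isSome) : specialT μ m r j ≠ specialT μ m' r j := by
  intro heq
  obtain ⟨v, hv⟩ := Option.isSome_iff_exists.mp hs
  have hv' : specialT μ m' r j = some v := heq ▸ hv
  have hmm' : m.1 ≠ m'.1 := fun h => hmm (Fin.ext h)
  have A := sval hμ m.2 (by omega : r.1 ≤ μ) j.2 hv
  have B := sval hμ m'.2 (by omega : r.1 ≤ μ) j.2 hv'
  rcases A with ⟨u1, hA⟩ | ⟨k1, K1, hA⟩ <;> rcases B with ⟨u2, hB⟩ | ⟨k2, K2, hB⟩ <;> omega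

lemma special_row_filter (hμ : 2 ≤ μ) (m : Fin μ) (r : Fin (μ+1)) :
    (Finset.univ.filter fun j : Fin (2*μ-1) => (specialT μ m r j).isSome).card
      = if r.1 = 0 then 2*μ-1 else 2*μ-2 := by
  by_cases hr : r.1 = 0
  · rw [if_pos hr]
    have : (Finset.univ.filter fun j : Fin (2*μ-1) => (specialT μ m r j).isSome) = Finset.univ := by
      apply Finset.filter_true_of_mem
      intro j _
      rw [specialT, ssome hμ]
      omega
    rw [this, Finset.card_univ, Fintype.card_fin]
  · rw [if_neg hr]
    have hrb : r.1 ≤ μ := by omega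
    have hmem : (⟨r.1, by omega⟩ : Fin (2*μ-1)) ∈ Finset.univ := Finset.mem_univ _
    have : (Finset.univ.filter fun j : Fin (2*μ-1) => (specialT μ m r j).isSome)
        = Finset.univ.erase ⟨r.1, by omega⟩ := by
      ext j
      simp only [Finset.mem_filter, Finset.mem_univ, true_and, Finset.mem_erase, and_true]
      rw [specialT, ssome hμ]
      constructor
      · intro h hj
        apply h
        simp only [Fin.ext_iff, Fin.val_mk] at hj
        omega
      · intro h hcon
        apply h
        refine Fin.ext ?_
        simp only [Fin.val_mk]
        omega
    rw [this, Finset.card_erase_of_mem hmem, Finset.card_univ, Fintype.card_fin]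
    omega

lemma special_rowset (hμ : 2 ≤ μ) (m : Fin μ) (r : Fin (μ+1)) :
    {s | ∃ j, specialT μ m r j = some s} =
      ↑(if r.1 = 0 then Finset.range (2*μ-1) else (Finset.range (2*μ-1)).erase (r.1 % μ)) := by
  have hrmod := modc (n := μ) (by omega) (x := r.1) (by omega)
  apply oimg_eq
  · intro j s hs
    have A := sval hμ m.2 (by omega : r.1 ≤ μ) j.2 hs
    by_cases hr : r.1 = 0
    · rw [if_pos hr]
      simp only [Finset.mem_range]
      rcases A with ⟨u1, hA⟩ | ⟨k1, K1, hA⟩ <;> omega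
    · rw [if_neg hr]
      simp only [Finset.mem_erase, Finset.mem_range]
      rcases A with ⟨u1, hA⟩ | ⟨k1, K1, hA⟩ <;> (constructor <;> omega)
  · intro j₁ j₂ s hs1 hs2
    exact special_latin_row hμ m r j₁ j₂ s hs1 hs2
  · rw [special_row_filter hμ m r]
    by_cases hr : r.1 = 0
    · simp [hr]
    · rw [if_neg hr, if_neg hr]
      have : r.1 % μ ∈ Finset.range (2*μ-1) := by
        simp only [Finset.mem_range]; omega
      rw [Finset.card_erase_of_mem this, Finset.card_range]
      omega

lemma special_col_filter (hμ : 2 ≤ μ) (m : Fin μ) (j : Fin (2*μ-1)) :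
    (Finset.univ.filter fun r : Fin (μ+1) => (specialT μ m r j).isSome).card
      = if 1 ≤ j.1 ∧ j.1 ≤ μ then μ else μ+1 := by
  by_cases hj : 1 ≤ j.1 ∧ j.1 ≤ μ
  · rw [if_pos hj]
    have hmem : (⟨j.1, by omega⟩ : Fin (μ+1)) ∈ Finset.univ := Finset.mem_univ _
    have : (Finset.univ.filter fun r : Fin (μ+1) => (specialT μ m r j).isSome)
        = Finset.univ.erase ⟨j.1, by omega⟩ := by
      ext r
      simp only [Finset.mem_filter, Finset.mem_univ, true_and, Finset.mem_erase, and_true]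
      rw [specialT, ssome hμ]
      constructor
      · intro h hj2
        apply h
        simp only [Fin.ext_iff, Fin.val_mk] at hj2
        omega
      · intro h hcon
        apply h
        refine Fin.ext ?_
        simp only [Fin.val_mk]
        omega
    rw [this, Finset.card_erase_of_mem hmem, Finset.card_univ, Fintype.card_fin]
    omega
  · rw [if_neg hj]
    have : (Finset.univ.filter fun r : Fin (μ+1) => (specialT μ m r j).isSome) = Finset.univ := by
      apply Finset.filter_true_of_mem
      intro r _
      rw [specialT, ssome hμ]
      omega
    rw [this, Finset.card_univ, Fintype.card_fin]

lemma special_colset (hμ : 2 ≤ μ) (m : Fin μ) (j : Fin (2*μ-1)) :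
    {s | ∃ r, specialT μ m r j = some s} =
      ↑(if 1 ≤ j.1 ∧ j.1 ≤ μ then
          insert (j.1 % μ) (Finset.Ico μ (2*μ-1))
        else insert (μ - 1 + (if j.1 = 0 then μ-1 else j.1 - μ)) (Finset.range μ)) := by
  have hjmod := modc (n := μ) (by omega) (x := j.1) (by omega)
  have hk0 : (j.1 = 0 ∧ (if j.1 = 0 then μ-1 else j.1 - μ) = μ-1) ∨
      (j.1 ≠ 0 ∧ (if j.1 = 0 then μ-1 else j.1 - μ) = j.1 - μ) := by
    by_cases hj0 : j.1 = 0
    · rw [if_pos hj0]; exact Or.inl ⟨hj0, rfl⟩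
    · rw [if_neg hj0]; exact Or.inr ⟨hj0, rfl⟩
  apply oimg_eq
  · intro r s hs
    have A := sval hμ m.2 (by omega : r.1 ≤ μ) j.2 hs
    by_cases hj : 1 ≤ j.1 ∧ j.1 ≤ μ
    · rw [if_pos hj]
      simp only [Finset.mem_insert, Finset.mem_Ico]
      rcases A with ⟨u1, hA⟩ | ⟨k1, K1, hA⟩ <;> omega
    · rw [if_neg hj]
      simp only [Finset.mem_insert, Finset.mem_range]
      rcases A with ⟨u1, hA⟩ | ⟨k1, K1, hA⟩ <;> omega
  · intro r₁ r₂ s hs1 hs2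
    exact special_latin_col hμ m r₁ r₂ j s hs1 hs2
  · rw [special_col_filter hμ m j]
    by_cases hj : 1 ≤ j.1 ∧ j.1 ≤ μ
    · rw [if_pos hj, if_pos hj]
      have hnot : j.1 % μ ∉ Finset.Ico μ (2*μ-1) := by
        simp only [Finset.mem_Ico]; omega
      rw [Finset.card_insert_of_notMem hnot, Nat.card_Ico]
      omega
    · rw [if_neg hj, if_neg hj]
      have hnot : μ - 1 + (if j.1 = 0 then μ-1 else j.1 - μ) ∉ Finset.range μ := by
        simp only [Finset.mem_range]; omega
      rw [Finset.card_insert_of_notMem hnot, Finset.card_range]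

lemma special_trade (hμ : 2 ≤ μ) : IsMuWayLatinTrade (specialT μ) := by
  refine ⟨?_, ?_, ?_, ?_, ?_⟩
  · intro m
    exact ⟨fun i j₁ j₂ s h1 h2 => special_latin_row hμ m i j₁ j₂ s h1 h2,
      fun i₁ i₂ j s h1 h2 => special_latin_col hμ m i₁ i₂ j s h1 h2⟩
  · intro m m' i j
    rw [specialT, specialT, ssome hμ, ssome hμ]
    exact id
  · exact fun m m' i j hmm hs => special_distinct hμ m m' i j hmm hs
  · intro m m' i
    rw [special_rowset hμ m i, special_rowset hμ m' i]
  · intro m m' j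
    rw [special_colset hμ m j, special_colset hμ m' j]

lemma special_volume (hμ : 2 ≤ μ) : tradeVolume (specialT μ) + μ = (μ+1) * (2*μ-1) := by
  classical
  unfold tradeVolume
  have hzero : (0 : ℕ) < μ := by omega
  have hiff : ∀ p : Fin (μ+1) × Fin (2*μ-1),
      (∃ m : Fin μ, (specialT μ m p.1 p.2).isSome) ↔ ¬(1 ≤ p.2.1 ∧ p.2.1 ≤ μ ∧ p.1.1 = p.2.1) := by
    intro p
    constructor
    · rintro ⟨m, hm⟩
      rw [specialT, ssome hμ] at hm
      exact hm
    · intro h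
      exact ⟨⟨0, hzero⟩, by rw [specialT, ssome hμ]; exact h⟩
  have hfe : (Finset.univ.filter fun p : Fin (μ+1) × Fin (2*μ-1) =>
      ∃ m, (specialT μ m p.1 p.2).isSome) =
      Finset.univ.filter fun p : Fin (μ+1) × Fin (2*μ-1) =>
        ¬(1 ≤ p.2.1 ∧ p.2.1 ≤ μ ∧ p.1.1 = p.2.1) := by
    apply Finset.filter_congr
    intro p _
    first
      | exact hiff p
      | (simp only [eq_iff_iff]; exact hiff p)
  rw [hfe]
  have hsplit := Finset.card_filter_add_card_filter_not
    (s := (Finset.univ : Finset (Fin (μ+1) × Fin (2*μ-1))))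
    (fun p => ¬(1 ≤ p.2.1 ∧ p.2.1 ≤ μ ∧ p.1.1 = p.2.1))
  have himg : (Finset.univ.filter fun p : Fin (μ+1) × Fin (2*μ-1) =>
      ¬¬(1 ≤ p.2.1 ∧ p.2.1 ≤ μ ∧ p.1.1 = p.2.1)) =
      Finset.univ.image (fun a : Fin μ =>
        ((⟨a.1+1, by omega⟩ : Fin (μ+1)), (⟨a.1+1, by omega⟩ : Fin (2*μ-1)))) := by
    ext p
    simp only [Finset.mem_filter, Finset.mem_univ, true_and, Finset.mem_image, not_not]
    constructor
    · rintro ⟨h1, h2, h3⟩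
      refine ⟨⟨p.2.1 - 1, by omega⟩, ?_⟩
      refine Prod.ext (Fin.ext ?_) (Fin.ext ?_) <;> simp <;> omega
    · rintro ⟨a, ha⟩
      obtain ⟨ha1, ha2⟩ := Prod.ext_iff.mp ha
      rw [Fin.ext_iff] at ha1 ha2
      simp only [Fin.val_mk] at ha1 ha2
      have := a.2
      omega
  have hcard2 : (Finset.univ.filter fun p : Fin (μ+1) × Fin (2*μ-1) =>
      ¬¬(1 ≤ p.2.1 ∧ p.2.1 ≤ μ ∧ p.1.1 = p.2.1)).card = μ := by
    rw [himg, Finset.card_image_of_injective, Finset.card_univ, Fintype.card_fin]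
    intro a b hab
    simp only [Prod.ext_iff, Fin.ext_iff, Fin.val_mk] at hab
    exact Fin.ext (by omega)
  have huniv : (Finset.univ : Finset (Fin (μ+1) × Fin (2*μ-1))).card = (μ+1) * (2*μ-1) := by
    rw [Finset.card_univ]
    simp [Fintype.card_prod]
  rw [hcard2, huniv] at hsplit
  exact hsplit

end Special2


theorem stmt_18 (μ s : ℕ) (hμ : 2 ≤ μ) (hs : 3 * μ ^ 2 - μ ≤ s) :
    ∃ (r c : ℕ) (T : Fin μ → Fin r → Fin c → Option ℕ),
      IsMuWayLatinTrade T ∧ tradeVolume T = s := by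
  have hμ0 : 0 < μ := by omega
  have hP : μ ^ 2 = μ * μ := by ring
  rw [hP] at hs
  have hPμ : μ ≤ μ * μ := Nat.le_mul_of_pos_left μ hμ0
  have hs' : 3 * (μ * μ) ≤ s + μ := by omega
  clear hs
  obtain ⟨q, t, hqt, htlt⟩ : ∃ q t, μ * q + t = s ∧ t < μ :=
    ⟨s / μ, s % μ, Nat.div_add_mod s μ, Nat.mod_lt s hμ0⟩
  have hmul1 : μ * (μ - 1) + μ = μ * μ := by
    have h1 : (μ - 1) + 1 = μ := by omega
    calc μ * (μ - 1) + μ = μ * ((μ - 1) + 1) := by ring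
      _ = μ * μ := by rw [h1]
  have hqμ : μ ≤ q := by
    by_contra hcon
    push_neg at hcon
    have h5 : μ * q ≤ μ * (μ - 1) := mul_le_mul_right (by omega) μ
    omega
  by_cases ht0 : t = 0
  · -- single rectangle μ × q
    refine ⟨μ, q, rectT μ μ q, rect_trade hμ0 le_rfl hqμ, ?_⟩
    rw [rect_volume hμ0]
    omega
  · by_cases hsne : s + 1 = 3 * (μ * μ)
    · -- special case s = 3μ² − 1
      refine ⟨(μ+1)+μ, (2*μ-1)+μ, dsum (specialT μ) (rectT μ μ μ), ?_, ?_⟩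
      · exact dsum_trade (special_trade hμ) (rect_trade hμ0 le_rfl le_rfl)
      · rw [dsum_volume, rect_volume hμ0]
        have hv := special_volume (μ := μ) hμ
        have hb1 : (μ+1)*(2*μ-1) + (μ+1) = 2*(μ*μ) + 2*μ := by
          have h1 : (2*μ-1) + 1 = 2*μ := by omega
          calc (μ+1)*(2*μ-1) + (μ+1) = (μ+1)*((2*μ-1)+1) := by ring
            _ = (μ+1)*(2*μ) := by rw [h1]
            _ = 2*(μ*μ) + 2*μ := by ring
        omega
    · -- two rectangles (μ+1)×(μ+t) and μ×a
      have hbridge1 : μ*(2*μ+t) = 2*(μ*μ) + μ*t := by ring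
      have hbridge2 : μ*t + μ = μ*(t+1) := by ring
      have ha : 2*μ + t + 1 ≤ q := by
        by_contra hcon
        push_neg at hcon
        have h5 : μ*q ≤ μ*(2*μ+t) := mul_le_mul_right (by omega) μ
        by_cases ht1 : t = μ - 1
        · by_cases hq3 : q = 3*μ - 1
          · have h6 : μ*(3*μ-1) + μ = 3*(μ*μ) := by
              have h1 : (3*μ-1) + 1 = 3*μ := by omega
              calc μ*(3*μ-1) + μ = μ*((3*μ-1)+1) := by ring
                _ = μ*(3*μ) := by rw [h1]
                _ = 3*(μ*μ) := by ring
            rw [hq3] at hqt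
            exact hsne (by omega)
          · have h7 : μ*q ≤ μ*(3*μ-2) := mul_le_mul_right (by omega) μ
            have h8 : μ*(3*μ-2) + 2*μ = 3*(μ*μ) := by
              have h1 : (3*μ-2) + 2 = 3*μ := by omega
              calc μ*(3*μ-2) + 2*μ = μ*((3*μ-2)+2) := by ring
                _ = μ*(3*μ) := by rw [h1]
                _ = 3*(μ*μ) := by ring
            omega
        · have h9 : μ*(t+1) ≤ μ*(μ-1) := mul_le_mul_right (by omega) μ
          omega
      obtain ⟨a, haq⟩ : ∃ a, q = a + (μ + t + 1) := ⟨q - (μ+t+1), by omega⟩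
      have hvol : μ*q + t = μ*a + (μ+1)*(μ+t) := by rw [haq]; ring
      refine ⟨(μ+1)+μ, (μ+t)+a, dsum (rectT μ (μ+1) (μ+t)) (rectT μ μ a), ?_, ?_⟩
      · exact dsum_trade (rect_trade hμ0 (by omega) (by omega)) (rect_trade hμ0 le_rfl (by omega))
      · rw [dsum_volume, rect_volume hμ0, rect_volume hμ0]
        omega
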